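/- For any n points z_1, ..., z_n on the complex unit circle, there exists a point z_0 of modulus 1 such that the sum over j of 1/|z_0 - z_j|^2 is at most n^2/4. -/

import Mathlib

open Finset Complex

section
variable {n : ℕ} {η : ℂ}

private lemma conj_eq_inv (x : ℂ) (hx : normSq x = 1) : (starRingEnd ℂ) x = x⁻¹ := by
  have h0 : x ≠ 0 := by
    intro h; rw [h] at hx; simp at hx
  field_simp
  rw [mul_comm, mul_conj, hx, ofReal_one]

private lemma cast_weight (x : ℂ) (hx : normSq x = 1) :
    ((2 / normSq (1 - x) : ℝ) : ℂ) = 2 / ((1 - x) * (1 - x⁻¹)) := by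
  have : ((normSq (1 - x) : ℝ) : ℂ) = (1 - x) * (1 - x⁻¹) := by
    rw [← mul_conj, map_sub, map_one, conj_eq_inv x hx]
  push_cast [← this]
  norm_num

end


private lemma geom_zero {x : ℂ} {N : ℕ} (h1 : x ^ N = 1) (hx : x ≠ 1) :
    ∑ k ∈ range N, x ^ k = 0 := by
  rw [geom_sum_eq hx, h1, sub_self, zero_div]

private lemma zpow_eq_one_iff_dvd (η : ℂ) (N : ℕ) (hN : 0 < N) (h1 : η ^ N = 1)
    (hmin : ∀ m : ℕ, 0 < m → m < N → η ^ m ≠ 1) (c : ℤ) :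
    η ^ c = 1 ↔ (N : ℤ) ∣ c := by
  have hη : η ≠ 0 := by
    intro h
    rw [h, zero_pow hN.ne'] at h1
    exact zero_ne_one h1
  constructor
  · intro h
    have hdm : c = (N : ℤ) * (c / N) + c % N := (Int.mul_ediv_add_emod c N).symm
    have hr0 : 0 ≤ c % N := Int.emod_nonneg c (by exact_mod_cast hN.ne')
    have hrN : c % N < N := Int.emod_lt_of_pos c (by exact_mod_cast hN)
    have hzN : η ^ ((N : ℤ) * (c / N)) = 1 := by
      rw [zpow_mul, zpow_natCast, h1, one_zpow]
    have hmod : η ^ (c % N) = 1 := by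
      have h2 := h
      rw [hdm, zpow_add₀ hη, hzN, one_mul] at h2
      exact h2
    set r := (c % N).toNat with hrdef
    have hrc : (r : ℤ) = c % N := Int.toNat_of_nonneg hr0
    have hpow : η ^ r = 1 := by
      rw [← hrc, zpow_natCast] at hmod
      exact hmod
    have hr0' : r = 0 := by
      by_contra hne
      exact hmin r (Nat.pos_of_ne_zero hne) (by omega) hpow
    have : c % N = 0 := by omega
    exact Int.dvd_of_emod_eq_zero this
  · rintro ⟨t, rfl⟩
    rw [zpow_mul, zpow_natCast, h1, one_zpow]

private lemma I1 (n : ℕ) (hn : 0 < n) (η : ℂ) (h2n : η ^ (2*n) = 1)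
    (hmin : ∀ m : ℕ, 0 < m → m < 2*n → η ^ m ≠ 1) (hns : normSq η = 1)
    (d : ℕ) (hd : d ≤ n) :
    ∑ k ∈ range n, ((2 / normSq (1 - η ^ (2*k+1)) : ℝ) : ℂ) * (η ^ (2*k+1)) ^ d
      = (n:ℂ)^2/2 - (d:ℂ)*n := by
  have hη0 : η ≠ 0 := by
    intro h; rw [h, zero_pow (by omega : 2*n ≠ 0)] at h2n; exact zero_ne_one h2n
  have hηn : η ^ n = -1 := by
    have hsq : (η ^ n - 1) * (η ^ n + 1) = 0 := by
      have : η ^ n * η ^ n = 1 := by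
        rw [← pow_add]; rw [show n + n = 2*n by ring]; exact h2n
      linear_combination this
    rcases mul_eq_zero.1 hsq with h | h
    · exact absurd (by linear_combination h : η ^ n = 1) (hmin n hn (by omega))
    · linear_combination h
  have hdvd : ∀ c : ℤ, η ^ c = 1 ↔ ((2*n : ℕ) : ℤ) ∣ c :=
    zpow_eq_one_iff_dvd η (2*n) (by omega) h2n hmin
  -- step 1 : rewrite each term as (1/2) * double sum
  have hterm : ∀ k ∈ range n,
      ((2 / normSq (1 - η ^ (2*k+1)) : ℝ) : ℂ) * (η ^ (2*k+1)) ^ d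
        = (1/2) * ∑ j ∈ range n, ∑ j' ∈ range n,
            (η ^ ((d:ℤ) + j - j')) ^ (2*k+1) := by
    intro k hk
    rw [mem_range] at hk
    set Ω := η ^ (2*k+1) with hΩdef
    have hΩns : normSq Ω = 1 := by rw [hΩdef, map_pow, hns, one_pow]
    have hΩ0 : Ω ≠ 0 := pow_ne_zero _ hη0
    have hΩ1 : Ω ≠ 1 := hmin (2*k+1) (by omega) (by omega)
    have hΩn : Ω ^ n = -1 := by
      rw [hΩdef, ← pow_mul, mul_comm (2*k+1) n, pow_mul, hηn]
      exact Odd.neg_one_pow ⟨k, by ring⟩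
    have hdcast : ((2 / normSq (1 - Ω) : ℝ) : ℂ) = 2 / ((1 - Ω) * (1 - Ω⁻¹)) :=
      cast_weight Ω hΩns
    have hinner : ∀ j' : ℕ, Ω⁻¹ ^ j' = Ω ^ (-(j':ℤ)) := by
      intro j'
      rw [inv_pow, ← zpow_natCast Ω j', ← zpow_neg]
    have hΩin : Ω⁻¹ ^ n = -1 := by rw [inv_pow, hΩn]; norm_num
    obtain ⟨Ωi, hΩi⟩ : ∃ w, w = Ω⁻¹ := ⟨Ω⁻¹, rfl⟩
    have hunit : Ω * Ωi = 1 := by rw [hΩi, mul_inv_cancel₀ hΩ0]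
    have hi1 : 1 - Ω ≠ 0 := fun h => hΩ1 (by linear_combination -h)
    have hi2 : 1 - Ωi ≠ 0 := by
      intro h
      have : Ωi = 1 := by linear_combination -h
      rw [this, mul_one] at hunit
      exact hΩ1 hunit
    set G := ∑ j ∈ range n, Ω ^ j with hGdef
    set G' := ∑ j ∈ range n, Ωi ^ j with hG'def
    have hG1 : (1 - Ω) * G = 2 := by
      have := geom_sum_mul Ω n
      rw [← hGdef] at this
      linear_combination -this - hΩn
    have hG2 : (1 - Ωi) * G' = 2 := by
      have := geom_sum_mul Ωi n
      rw [← hG'def] at this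
      have : (1 - Ωi) * G' = 1 - Ωi ^ n := by linear_combination -this
      rw [this, hΩi, hΩin]
      norm_num
    have hw : ((2 / normSq (1 - Ω) : ℝ) : ℂ) = (1/2) * G * G' := by
      rw [hdcast, ← hΩi, div_eq_iff (mul_ne_zero hi1 hi2)]
      linear_combination (-(1/2) * (1 - Ωi) * G') * hG1 - hG2
    calc ((2 / normSq (1 - Ω) : ℝ) : ℂ) * Ω ^ d
        = (1/2) * ∑ j ∈ range n, ∑ j' ∈ range n, (Ω ^ (d+j)) * Ωi ^ j' := by
          rw [hw, hGdef, hG'def]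
          simp only [sum_mul, mul_sum]
          rw [Finset.sum_comm]
          apply sum_congr rfl; intro j _
          apply sum_congr rfl; intro j' _
          rw [pow_add]
          ring
      _ = (1/2) * ∑ j ∈ range n, ∑ j' ∈ range n, (η ^ ((d:ℤ) + j - j')) ^ (2*k+1) := by
          congr 1
          apply sum_congr rfl; intro j _
          apply sum_congr rfl; intro j' _
          rw [hΩi, hinner, ← zpow_natCast Ω (d+j), ← zpow_add₀ hΩ0,
            show ((d+j:ℕ):ℤ) + -(j':ℤ) = (d:ℤ) + j - j' by push_cast; ring, hΩdef]
          rw [← zpow_natCast η (2*k+1), ← zpow_mul, mul_comm ((2*k+1:ℕ):ℤ), zpow_mul, zpow_natCast]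
  rw [sum_congr rfl hterm, ← mul_sum]
  have hswap : ∑ k ∈ range n, ∑ j ∈ range n, ∑ j' ∈ range n, (η ^ ((d:ℤ)+j-j'))^(2*k+1)
      = ∑ j ∈ range n, ∑ j' ∈ range n, ∑ k ∈ range n, (η ^ ((d:ℤ)+j-j'))^(2*k+1) := by
    rw [Finset.sum_comm]
    exact sum_congr rfl fun j _ => Finset.sum_comm
  rw [hswap]
  have hn' : (0:ℤ) < n := by exact_mod_cast hn
  have hksum : ∀ j ∈ range n, ∀ j' ∈ range n,
      ∑ k ∈ range n, (η ^ ((d:ℤ)+j-j'))^(2*k+1)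
        = (if (j':ℤ) = (d:ℤ)+j then (n:ℂ) else 0)
          + (if (j':ℤ) = (d:ℤ)+j-n then -(n:ℂ) else 0) := by
    intro j hj j' hj'
    rw [mem_range] at hj hj'
    set c : ℤ := (d:ℤ)+j-j' with hc
    set ρ := η ^ c with hρ
    have hsum : ∑ k ∈ range n, ρ^(2*k+1) = ρ * ∑ k ∈ range n, (ρ^2)^k := by
      rw [mul_sum]
      exact sum_congr rfl fun k _ => by rw [← pow_mul, pow_succ, mul_comm]
    by_cases hcd : (n:ℤ) ∣ c
    · obtain ⟨t, ht⟩ := hcd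
      have htb : t = 0 ∨ t = 1 := by
        have ht1 : -1 < t := by
          by_contra hcon
          push_neg at hcon
          have : c ≤ -(n:ℤ) := by
            rw [ht]
            calc (n:ℤ)*t ≤ n*(-1) := mul_le_mul_of_nonneg_left hcon hn'.le
              _ = -n := by ring
          omega
        have ht2 : t < 2 := by
          by_contra hcon
          push_neg at hcon
          have : 2*(n:ℤ) ≤ c := by
            rw [ht]
            calc 2*(n:ℤ) = n*2 := by ring
              _ ≤ n*t := mul_le_mul_of_nonneg_left hcon hn'.le
          omega
        omega
      rcases htb with rfl | rfl
      · have hc0 : c = 0 := by simpa using ht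
        have hρ1 : ρ = 1 := by rw [hρ, hc0, zpow_zero]
        rw [hsum, hρ1, if_pos (by omega), if_neg (by omega)]
        simp
      · have hcn : c = (n:ℤ) := by simpa using ht
        have hρn : ρ = -1 := by rw [hρ, hcn, zpow_natCast, hηn]
        rw [hsum, hρn, if_neg (by omega), if_pos (by omega)]
        simp
    · have hρ2 : ρ^2 ≠ 1 := by
        have h22 : ρ^2 = η^(c+c) := by rw [hρ, sq, ← zpow_add₀ hη0]
        rw [h22]
        intro h
        rw [hdvd] at h
        apply hcd
        have h2 : (2:ℤ) * (n:ℤ) ∣ 2 * c := by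
          rwa [show ((2*n:ℕ):ℤ) = 2*(n:ℤ) by push_cast; ring,
            show c + c = 2*c by ring] at h
        exact (mul_dvd_mul_iff_left (two_ne_zero)).1 h2
      have hρ2n : (ρ^2)^n = 1 := by
        rw [← pow_mul, hρ, ← zpow_natCast (η^c) (2*n), ← zpow_mul, mul_comm c,
          zpow_mul, zpow_natCast, h2n, one_zpow]
      rw [hsum, geom_zero hρ2n hρ2, mul_zero, if_neg, if_neg, add_zero]
      · intro h; exact hcd ⟨1, by omega⟩
      · intro h; exact hcd ⟨0, by omega⟩
  rw [sum_congr rfl (fun j hj => sum_congr rfl (fun j' hj' => hksum j hj j' hj'))]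
  have hj'sum : ∀ j ∈ range n,
      ∑ j' ∈ range n, ((if (j':ℤ) = (d:ℤ)+j then (n:ℂ) else 0)
          + (if (j':ℤ) = (d:ℤ)+j-n then -(n:ℂ) else 0))
        = if j < n - d then (n:ℂ) else -(n:ℂ) := by
    intro j hj
    rw [mem_range] at hj
    rw [sum_add_distrib]
    have h1 : ∑ j' ∈ range n, (if (j':ℤ) = (d:ℤ)+j then (n:ℂ) else 0)
        = if j < n-d then (n:ℂ) else 0 := by
      have he : ∀ j' ∈ range n, (if (j':ℤ) = (d:ℤ)+j then (n:ℂ) else 0)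
          = if j' = d+j then (n:ℂ) else 0 := by
        intro j' _
        exact if_congr (by omega) rfl rfl
      rw [sum_congr rfl he, sum_ite_eq' (range n) (d+j)]
      exact if_congr (by rw [mem_range]; omega) rfl rfl
    have h2 : ∑ j' ∈ range n, (if (j':ℤ) = (d:ℤ)+j-n then -(n:ℂ) else 0)
        = if j < n-d then 0 else -(n:ℂ) := by
      by_cases hcase : j < n-d
      · rw [if_pos hcase]
        apply sum_eq_zero
        intro j' hj'
        rw [mem_range] at hj'
        rw [if_neg (by omega)]
      · rw [if_neg hcase]
        have he : ∀ j' ∈ range n, (if (j':ℤ) = (d:ℤ)+j-n then -(n:ℂ) else 0)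
            = if j' = d+j-n then -(n:ℂ) else 0 := by
          intro j' _
          exact if_congr (by omega) rfl rfl
        rw [sum_congr rfl he, sum_ite_eq' (range n) (d+j-n), if_pos]
        rw [mem_range]; omega
    rw [h1, h2]
    by_cases hcase : j < n-d
    · simp [hcase]
    · simp [hcase]
  rw [sum_congr rfl hj'sum, sum_ite]
  have hf1 : filter (fun j => j < n - d) (range n) = range (n-d) := by
    ext j; simp only [mem_filter, mem_range]; omega
  have hf2 : filter (fun j => ¬ j < n - d) (range n) = Ico (n-d) n := by
    ext j; simp only [mem_filter, mem_range, mem_Ico]; omega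
  rw [hf1, hf2, sum_const, sum_const, card_range, Nat.card_Ico,
    show n - (n - d) = d by omega]
  simp only [nsmul_eq_mul]
  push_cast [Nat.cast_sub hd]
  ring
private lemma I2 (n : ℕ) (hn : 0 < n) (η : ℂ) (h2n : η ^ (2*n) = 1)
    (hmin : ∀ m : ℕ, 0 < m → m < 2*n → η ^ m ≠ 1) (hns : normSq η = 1)
    (d : ℕ) (hd : d ≤ n) :
    ∑ k ∈ Ico 1 n, ((2 / normSq (1 - η ^ (2*k)) : ℝ) : ℂ) * (1 - (η ^ (2*k)) ^ d)
      = (d:ℂ) * ((n:ℂ) - d) := by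
  have hη0 : η ≠ 0 := by
    intro h; rw [h, zero_pow (by omega : 2*n ≠ 0)] at h2n; exact zero_ne_one h2n
  have hdvd : ∀ c : ℤ, η ^ c = 1 ↔ ((2*n : ℕ) : ℤ) ∣ c :=
    zpow_eq_one_iff_dvd η (2*n) (by omega) h2n hmin
  have hn' : (0:ℤ) < n := by exact_mod_cast hn
  set T : ℕ → ℂ := fun k => ((2 / normSq (1 - η ^ (2*k)) : ℝ) : ℂ) * (1 - (η ^ (2*k)) ^ d)
    with hT
  set g : ℕ → ℂ := fun k => ∑ j ∈ range d, ∑ j' ∈ range d, (η ^ (2*k)) ^ ((j:ℤ) - j')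
    with hg
  -- reflection
  have hrefl : ∑ k ∈ Ico 1 n, T k = ∑ k ∈ Ico 1 n, T (n - k) := by
    apply sum_nbij' (fun k => n - k) (fun k => n - k)
    · intro a ha; rw [mem_Ico] at *; omega
    · intro a ha; rw [mem_Ico] at *; omega
    · intro a ha; rw [mem_Ico] at ha; omega
    · intro a ha; rw [mem_Ico] at ha; omega
    · intro a ha; rw [mem_Ico] at ha
      rw [show n - (n - a) = a by omega]
  -- pointwise symmetrized value
  have hpair : ∀ k ∈ Ico 1 n, T k + T (n - k) = 2 * g k := by
    intro k hk
    rw [mem_Ico] at hk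
    set x := η ^ (2*k) with hx
    set xi := η ^ (2*(n-k)) with hxi
    have hx0 : x ≠ 0 := pow_ne_zero _ hη0
    have hunit : x * xi = 1 := by
      rw [hx, hxi, ← pow_add, show 2*k + 2*(n-k) = 2*n by omega, h2n]
    have hxinv : xi = x⁻¹ := eq_inv_of_mul_eq_one_right hunit
    have hx1 : x ≠ 1 := hmin (2*k) (by omega) (by omega)
    have hxi1 : xi ≠ 1 := hmin (2*(n-k)) (by omega) (by omega)
    have hxns : normSq x = 1 := by rw [hx, map_pow, hns, one_pow]
    have hi1 : (1:ℂ) - x ≠ 0 := fun h => hx1 (by linear_combination -h)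
    have hi2 : (1:ℂ) - xi ≠ 0 := fun h => hxi1 (by linear_combination -h)
    -- the two weights agree
    have hwts : normSq (1 - xi) = normSq (1 - x) := by
      rw [hxinv, ← conj_eq_inv x hxns,
        show (1:ℂ) - (starRingEnd ℂ) x = (starRingEnd ℂ) (1 - x) by rw [map_sub, map_one],
        normSq_conj]
    set A := ∑ j ∈ range d, x ^ j with hA
    set B := ∑ j ∈ range d, xi ^ j with hB
    have hA1 : (1 - x) * A = 1 - x ^ d := by
      have := geom_sum_mul x d
      rw [← hA] at this
      linear_combination -this
    have hB1 : (1 - xi) * B = 1 - xi ^ d := by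
      have := geom_sum_mul xi d
      rw [← hB] at this
      linear_combination -this
    have hxd : x ^ d * xi ^ d = 1 := by rw [← mul_pow, hunit, one_pow]
    have hTsum : T k + T (n - k) = ((2 / normSq (1 - x) : ℝ) : ℂ) * (2 - x^d - xi^d) := by
      rw [hT]
      simp only []
      rw [hwts]
      ring
    rw [hTsum, cast_weight x hxns, ← hxinv]
    have hfact : 2 - x^d - xi^d = ((1-x)*(1-xi)) * (A*B) := by
      have : ((1-x)*A) * ((1-xi)*B) = (1-x^d) * (1-xi^d) := by rw [hA1, hB1]
      linear_combination -this - hxd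
    rw [hfact]
    have hP : (1-x)*(1-xi) ≠ 0 := mul_ne_zero hi1 hi2
    have hstep : 2 / ((1-x)*(1-xi)) * (((1-x)*(1-xi)) * (A*B)) = 2 * (A*B) := by
      field_simp
    rw [hstep]
    -- A*B = g k
    congr 1
    rw [hA, hB, sum_mul_sum, hg]
    apply sum_congr rfl; intro j _
    apply sum_congr rfl; intro j' _
    rw [hxinv, inv_pow, ← zpow_natCast x j, ← zpow_natCast x j', ← zpow_neg,
      ← zpow_add₀ hx0, ← hx]
    rfl
  -- sum of g over all of range n
  have hgsum : ∑ k ∈ range n, g k = (d:ℂ) * n := by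
    rw [hg]
    simp only []
    rw [Finset.sum_comm]
    have hj : ∀ j ∈ range d, ∑ k ∈ range n, ∑ j' ∈ range d, (η ^ (2*k)) ^ ((j:ℤ) - j')
        = (n:ℂ) := by
      intro j hj
      rw [mem_range] at hj
      rw [Finset.sum_comm]
      have hj' : ∀ j' ∈ range d, ∑ k ∈ range n, (η ^ (2*k)) ^ ((j:ℤ) - j')
          = if j' = j then (n:ℂ) else 0 := by
        intro j' hj'
        rw [mem_range] at hj'
        set c : ℤ := (j:ℤ) - j' with hc
        have hkterm : ∀ k ∈ range n, (η ^ (2*k)) ^ c = (η ^ (2*c)) ^ k := by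
          intro k _
          rw [← zpow_natCast η (2*k), ← zpow_mul,
            show ((2*k:ℕ):ℤ)*c = (2*c)*(k:ℤ) by push_cast; ring,
            zpow_mul, zpow_natCast]
        rw [sum_congr rfl hkterm]
        by_cases hcase : j' = j
        · rw [if_pos hcase]
          have : c = 0 := by omega
          rw [this]
          simp
        · rw [if_neg hcase]
          have hne1 : η ^ (2*c) ≠ 1 := by
            intro h
            rw [hdvd] at h
            obtain ⟨t, ht⟩ := h
            have hc0 : c = (n:ℤ) * t := by
              have h2 : (2:ℤ) * (n:ℤ) * t = 2 * c := by push_cast at ht; linarith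
              linarith [h2]
            have htb : t = 0 := by
              rcases lt_trichotomy t 0 with h' | h' | h'
              · have : (n:ℤ)*t ≤ n*(-1) := mul_le_mul_of_nonneg_left (by omega) hn'.le
                omega
              · exact h'
              · have : (n:ℤ)*1 ≤ n*t := mul_le_mul_of_nonneg_left (by omega) hn'.le
                omega
            rw [htb, mul_zero] at hc0
            omega
          have hpow1 : (η ^ (2*c)) ^ n = 1 := by
            rw [← zpow_natCast (η ^ (2*c)) n, ← zpow_mul,
              show 2*c*(n:ℤ) = ((2*n:ℕ):ℤ) * c by push_cast; ring,
              zpow_mul, zpow_natCast, h2n, one_zpow]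
          exact geom_zero hpow1 hne1
      rw [sum_congr rfl hj', sum_ite_eq' (range d) j]
      rw [if_pos (mem_range.2 hj)]
    rw [sum_congr rfl hj, sum_const, card_range, nsmul_eq_mul]
  -- peel off k = 0
  have hg0 : g 0 = (d:ℂ) * d := by
    rw [hg]
    simp only [Nat.mul_zero, pow_zero, one_zpow]
    rw [sum_const, sum_const, card_range, nsmul_eq_mul, nsmul_eq_mul]
    ring
  have hins : insert 0 (Ico 1 n) = range n := by
    ext k
    simp only [mem_insert, mem_Ico, mem_range]
    omega
  have hIco : ∑ k ∈ Ico 1 n, g k = (d:ℂ)*n - d*d := by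
    have h0 : (0:ℕ) ∉ Ico 1 n := by simp
    have := Finset.sum_insert (f := g) h0
    rw [hins, hgsum, hg0] at this
    linear_combination -this
  have h2L : 2 * ∑ k ∈ Ico 1 n, T k = 2 * ((d:ℂ)*n - d*d) := by
    calc 2 * ∑ k ∈ Ico 1 n, T k
        = ∑ k ∈ Ico 1 n, T k + ∑ k ∈ Ico 1 n, T (n-k) := by rw [← hrefl]; ring
      _ = ∑ k ∈ Ico 1 n, (T k + T (n-k)) := by rw [sum_add_distrib]
      _ = ∑ k ∈ Ico 1 n, 2 * g k := sum_congr rfl hpair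
      _ = 2 * ∑ k ∈ Ico 1 n, g k := by rw [mul_sum]
      _ = 2 * ((d:ℂ)*n - d*d) := by rw [hIco]
  have := mul_left_cancel₀ (two_ne_zero (α := ℂ)) h2L
  rw [this]
  ring
private lemma star_eta (n : ℕ) (hn : 0 < n) (η : ℂ) (h2n : η ^ (2*n) = 1)
    (hmin : ∀ m : ℕ, 0 < m → m < 2*n → η ^ m ≠ 1) (hns : normSq η = 1)
    (d : ℤ) (hd : d.natAbs ≤ n) :
    ∑ k ∈ range n, ((2 / normSq (1 - η ^ (2*k+1)) : ℝ) : ℂ) * (η ^ (2*k+1)) ^ d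
    + ∑ k ∈ Ico 1 n, ((2 / normSq (1 - η ^ (2*k)) : ℝ) : ℂ) * (1 - (η ^ (2*k)) ^ d)
      = (n:ℂ)^2/2 - (d:ℂ)^2 := by
  have hη0 : η ≠ 0 := by
    intro h; rw [h, zero_pow (by omega : 2*n ≠ 0)] at h2n; exact zero_ne_one h2n
  -- positive case as a helper
  have hpos : ∀ m : ℕ, m ≤ n →
      ∑ k ∈ range n, ((2 / normSq (1 - η ^ (2*k+1)) : ℝ) : ℂ) * (η ^ (2*k+1)) ^ (m:ℤ)
      + ∑ k ∈ Ico 1 n, ((2 / normSq (1 - η ^ (2*k)) : ℝ) : ℂ) * (1 - (η ^ (2*k)) ^ (m:ℤ))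
        = (n:ℂ)^2/2 - (m:ℂ)^2 := by
    intro m hm
    have e1 : ∀ k ∈ range n, ((2 / normSq (1 - η ^ (2*k+1)) : ℝ) : ℂ) * (η ^ (2*k+1)) ^ (m:ℤ)
        = ((2 / normSq (1 - η ^ (2*k+1)) : ℝ) : ℂ) * (η ^ (2*k+1)) ^ m := by
      intro k _; rw [zpow_natCast]
    have e2 : ∀ k ∈ Ico 1 n, ((2 / normSq (1 - η ^ (2*k)) : ℝ) : ℂ) * (1 - (η ^ (2*k)) ^ (m:ℤ))
        = ((2 / normSq (1 - η ^ (2*k)) : ℝ) : ℂ) * (1 - (η ^ (2*k)) ^ m) := by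
      intro k _; rw [zpow_natCast]
    rw [sum_congr rfl e1, sum_congr rfl e2,
      I1 n hn η h2n hmin hns m hm, I2 n hn η h2n hmin hns m hm]
    ring
  rcases le_or_gt 0 d with hsign | hsign
  · obtain ⟨m, rfl⟩ : ∃ m : ℕ, d = (m:ℤ) := ⟨d.toNat, (Int.toNat_of_nonneg hsign).symm⟩
    have hm : m ≤ n := by omega
    rw [hpos m hm]
    norm_num
  · obtain ⟨m, hm⟩ : ∃ m : ℕ, d = -(m:ℤ) := ⟨d.natAbs, by omega⟩
    have hmn : m ≤ n := by omega
    subst hm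
    -- reflection for sum 1
    have hS1 : ∑ k ∈ range n, ((2 / normSq (1 - η ^ (2*k+1)) : ℝ) : ℂ) * (η ^ (2*k+1)) ^ (-(m:ℤ))
        = ∑ k ∈ range n, ((2 / normSq (1 - η ^ (2*k+1)) : ℝ) : ℂ) * (η ^ (2*k+1)) ^ (m:ℤ) := by
      apply sum_nbij' (fun k => n-1-k) (fun k => n-1-k)
      · intro a ha; rw [mem_range] at *; omega
      · intro a ha; rw [mem_range] at *; omega
      · intro a ha; rw [mem_range] at ha; omega
      · intro a ha; rw [mem_range] at ha; omega
      · intro a ha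
        rw [mem_range] at ha
        have hinv : η ^ (2*(n-1-a)+1) = (η ^ (2*a+1))⁻¹ := by
          apply eq_inv_of_mul_eq_one_left
          rw [← pow_add, show 2*(n-1-a)+1 + (2*a+1) = 2*n by omega, h2n]
        have hΩns : normSq (η ^ (2*a+1)) = 1 := by rw [map_pow, hns, one_pow]
        rw [hinv]
        have hwt : normSq (1 - (η ^ (2*a+1))⁻¹) = normSq (1 - η ^ (2*a+1)) := by
          rw [← conj_eq_inv _ hΩns,
            show (1:ℂ) - (starRingEnd ℂ) (η ^ (2*a+1)) = (starRingEnd ℂ) (1 - η ^ (2*a+1)) by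
              rw [map_sub, map_one],
            normSq_conj]
        rw [hwt, inv_zpow, ← zpow_neg]
    -- reflection for sum 2
    have hS2 : ∑ k ∈ Ico 1 n, ((2 / normSq (1 - η ^ (2*k)) : ℝ) : ℂ) * (1 - (η ^ (2*k)) ^ (-(m:ℤ)))
        = ∑ k ∈ Ico 1 n, ((2 / normSq (1 - η ^ (2*k)) : ℝ) : ℂ) * (1 - (η ^ (2*k)) ^ (m:ℤ)) := by
      apply sum_nbij' (fun k => n-k) (fun k => n-k)
      · intro a ha; rw [mem_Ico] at *; omega
      · intro a ha; rw [mem_Ico] at *; omega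
      · intro a ha; rw [mem_Ico] at ha; omega
      · intro a ha; rw [mem_Ico] at ha; omega
      · intro a ha
        rw [mem_Ico] at ha
        have hinv : η ^ (2*(n-a)) = (η ^ (2*a))⁻¹ := by
          apply eq_inv_of_mul_eq_one_left
          rw [← pow_add, show 2*(n-a) + 2*a = 2*n by omega, h2n]
        have hΩns : normSq (η ^ (2*a)) = 1 := by rw [map_pow, hns, one_pow]
        rw [hinv]
        have hwt : normSq (1 - (η ^ (2*a))⁻¹) = normSq (1 - η ^ (2*a)) := by
          rw [← conj_eq_inv _ hΩns,
            show (1:ℂ) - (starRingEnd ℂ) (η ^ (2*a)) = (starRingEnd ℂ) (1 - η ^ (2*a)) by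
              rw [map_sub, map_one],
            normSq_conj]
        rw [hwt, inv_zpow, ← zpow_neg]
    rw [hS1, hS2, hpos m hmn]
    push_cast
    ring

private lemma star_exp (n : ℕ) (hn : 0 < n) (d : ℤ) (hd : d.natAbs ≤ n) :
    ∑ k ∈ range n, ((2 / normSq (1 - Complex.exp ((((2*(k:ℝ)+1)*Real.pi/n : ℝ)) * I)) : ℝ) : ℂ)
        * (Complex.exp ((((2*(k:ℝ)+1)*Real.pi/n : ℝ)) * I)) ^ d
    + ∑ k ∈ Ico 1 n, ((2 / normSq (1 - Complex.exp (((2*Real.pi*(k:ℝ)/n : ℝ)) * I)) : ℝ) : ℂ)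
        * (1 - (Complex.exp (((2*Real.pi*(k:ℝ)/n : ℝ)) * I)) ^ d)
    = (n:ℂ)^2/2 - (d:ℂ)^2 := by
  have hn0 : (n:ℂ) ≠ 0 := Nat.cast_ne_zero.2 hn.ne'
  have hn0' : (n:ℝ) ≠ 0 := Nat.cast_ne_zero.2 hn.ne'
  set η : ℂ := Complex.exp ((Real.pi/n : ℝ) * I) with hη
  have hexp1 : ∀ k : ℕ, Complex.exp ((((2*(k:ℝ)+1)*Real.pi/n : ℝ)) * I) = η ^ (2*k+1) := by
    intro k
    rw [hη, ← Complex.exp_nat_mul]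
    congr 1
    push_cast
    field_simp
  have hexp2 : ∀ k : ℕ, Complex.exp (((2*Real.pi*(k:ℝ)/n : ℝ)) * I) = η ^ (2*k) := by
    intro k
    rw [hη, ← Complex.exp_nat_mul]
    congr 1
    push_cast
    field_simp
  have h2n : η ^ (2*n) = 1 := by
    rw [hη, ← Complex.exp_nat_mul,
      show ((2*n:ℕ):ℂ) * (((Real.pi/n : ℝ):ℂ) * I) = 2*(Real.pi:ℂ)*I by
        push_cast; field_simp]
    exact Complex.exp_two_pi_mul_I
  have hmin : ∀ m : ℕ, 0 < m → m < 2*n → η ^ m ≠ 1 := by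
    intro m hm1 hm2 h
    rw [hη, ← Complex.exp_nat_mul, Complex.exp_eq_one_iff] at h
    obtain ⟨t, ht⟩ := h
    have hI : ((m:ℂ) * (Real.pi/n : ℝ)) * I = (((t:ℂ) * (2*(Real.pi:ℂ)))) * I := by
      push_cast at ht ⊢
      linear_combination ht
    have hre := mul_right_cancel₀ Complex.I_ne_zero hI
    have hreal : (m:ℝ) * (Real.pi/n) = (t:ℝ) * (2*Real.pi) := by
      exact_mod_cast hre
    have hπ : Real.pi ≠ 0 := Real.pi_ne_zero
    field_simp at hreal
    have key : (m:ℝ) = ((2*t*(n:ℤ) : ℤ):ℝ) := by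
      apply mul_right_cancel₀ hπ
      push_cast
      linear_combination Real.pi * hreal
    have hmz : (m:ℤ) = 2*t*(n:ℤ) := by exact_mod_cast key
    rcases le_or_gt t 0 with htc | htc
    · have hle : 2*t*(n:ℤ) ≤ 0 :=
        mul_nonpos_of_nonpos_of_nonneg (by omega) (by positivity)
      omega
    · have hge : 2*(n:ℤ) ≤ 2*t*(n:ℤ) :=
        mul_le_mul_of_nonneg_right (by omega : (2:ℤ) ≤ 2*t) (by positivity)
      omega
  have hns : normSq η = 1 := by
    have : ‖η‖ = 1 := by
      rw [hη, Complex.norm_exp]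
      simp
    rw [← Complex.sq_norm, this, one_pow]
  have e1 : ∀ k ∈ range n,
      ((2 / normSq (1 - Complex.exp ((((2*(k:ℝ)+1)*Real.pi/n : ℝ)) * I)) : ℝ) : ℂ)
        * (Complex.exp ((((2*(k:ℝ)+1)*Real.pi/n : ℝ)) * I)) ^ d
      = ((2 / normSq (1 - η ^ (2*k+1)) : ℝ) : ℂ) * (η ^ (2*k+1)) ^ d := by
    intro k _; rw [hexp1 k]
  have e2 : ∀ k ∈ Ico 1 n,
      ((2 / normSq (1 - Complex.exp (((2*Real.pi*(k:ℝ)/n : ℝ)) * I)) : ℝ) : ℂ)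
        * (1 - (Complex.exp (((2*Real.pi*(k:ℝ)/n : ℝ)) * I)) ^ d)
      = ((2 / normSq (1 - η ^ (2*k)) : ℝ) : ℂ) * (1 - (η ^ (2*k)) ^ d) := by
    intro k _; rw [hexp2 k]
  rw [sum_congr rfl e1, sum_congr rfl e2]
  exact star_eta n hn η h2n hmin hns d hd
private lemma expI_hasDeriv (c : ℂ) (θ : ℝ) :
    HasDerivAt (fun t : ℝ => Complex.exp ((t:ℂ) * c)) (c * Complex.exp ((θ:ℂ) * c)) θ := by
  have h1 : HasDerivAt (fun t : ℝ => ((t:ℝ):ℂ)) 1 θ := (hasDerivAt_id θ).ofReal_comp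
  have h2 : HasDerivAt (fun t : ℝ => (t:ℂ) * c) c θ := by
    simpa using h1.mul_const c
  simpa [mul_comm] using h2.cexp

private lemma w_hasDeriv (c : ℂ) (θ : ℝ) :
    HasDerivAt (fun t : ℝ => Complex.exp ((t:ℂ)*I) * (starRingEnd ℂ) c)
      (I * (Complex.exp ((θ:ℂ)*I) * (starRingEnd ℂ) c)) θ := by
  simpa [mul_assoc] using (expI_hasDeriv I θ).mul_const ((starRingEnd ℂ) c)

private lemma normSq_expI (θ : ℝ) : normSq (Complex.exp ((θ:ℂ) * I)) = 1 := by
  have : ‖Complex.exp ((θ:ℂ) * I)‖ = 1 := by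
    rw [Complex.norm_exp]; simp
  rw [← Complex.sq_norm, this, one_pow]

private lemma u_eq (c : ℂ) (hc : normSq c = 1) (θ : ℝ) :
    normSq (Complex.exp ((θ:ℂ) * I) - c)
      = 2 - 2*(Complex.exp ((θ:ℂ) * I) * (starRingEnd ℂ) c).re := by
  rw [Complex.normSq_sub, normSq_expI, hc]
  ring

private lemma u_hasDeriv (c : ℂ) (hc : normSq c = 1) (θ : ℝ) :
    HasDerivAt (fun t : ℝ => normSq (Complex.exp ((t:ℂ) * I) - c))
      (2*(Complex.exp ((θ:ℂ) * I) * (starRingEnd ℂ) c).im) θ := by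
  have hre : HasDerivAt (fun t : ℝ => (Complex.exp ((t:ℂ)*I) * (starRingEnd ℂ) c).re)
      ((I * (Complex.exp ((θ:ℂ)*I) * (starRingEnd ℂ) c)).re) θ :=
    Complex.reCLM.hasFDerivAt.comp_hasDerivAt θ (w_hasDeriv c θ)
  have h2 : HasDerivAt (fun t : ℝ => 2 - 2*(Complex.exp ((t:ℂ)*I) * (starRingEnd ℂ) c).re)
      (2*(Complex.exp ((θ:ℂ)*I)*(starRingEnd ℂ) c).im) θ := by
    have h3 := (hre.const_mul (2:ℝ)).const_sub 2
    refine h3.congr_deriv ?_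
    simp [Complex.mul_re]
    ring
  have hfun : (fun t : ℝ => normSq (Complex.exp ((t:ℂ)*I) - c))
      = fun t : ℝ => 2 - 2*(Complex.exp ((t:ℂ)*I) * (starRingEnd ℂ) c).re :=
    funext (u_eq c hc)
  rw [hfun]
  exact h2

private lemma ud_hasDeriv (c : ℂ) (hc : normSq c = 1) (θ : ℝ) :
    HasDerivAt (fun t : ℝ => 2*(Complex.exp ((t:ℂ)*I) * (starRingEnd ℂ) c).im)
      (2 - normSq (Complex.exp ((θ:ℂ) * I) - c)) θ := by
  have him : HasDerivAt (fun t : ℝ => (Complex.exp ((t:ℂ)*I) * (starRingEnd ℂ) c).im)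
      ((I * (Complex.exp ((θ:ℂ)*I) * (starRingEnd ℂ) c)).im) θ :=
    Complex.imCLM.hasFDerivAt.comp_hasDerivAt θ (w_hasDeriv c θ)
  have h3 := him.const_mul (2:ℝ)
  refine h3.congr_deriv ?_
  rw [u_eq c hc]
  simp [Complex.mul_im]

private lemma ud_sq (c : ℂ) (hc : normSq c = 1) (θ : ℝ) :
    (2*(Complex.exp ((θ:ℂ) * I) * (starRingEnd ℂ) c).im)^2
      = normSq (Complex.exp ((θ:ℂ) * I) - c) * (4 - normSq (Complex.exp ((θ:ℂ) * I) - c)) := by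
  set zz := Complex.exp ((θ:ℂ) * I) * (starRingEnd ℂ) c with hzz
  have hz1 : zz.re*zz.re + zz.im*zz.im = 1 := by
    rw [← Complex.normSq_apply, hzz, Complex.normSq_mul, normSq_conj, normSq_expI, hc, mul_one]
  rw [u_eq c hc]
  linear_combination 4*hz1
private lemma main_pos (n : ℕ) (hn : 0 < n) (z : Fin n → ℂ)
    (hz : ∀ j, ‖z j‖ = 1) :
    ∃ z₀ : ℂ, ‖z₀‖ = 1 ∧
      ∑ j, 1 / ‖z₀ - z j‖ ^ 2 ≤ (n : ℝ) ^ 2 / 4 := by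
  have hzns : ∀ j, normSq (z j) = 1 := fun j => by
    rw [← Complex.sq_norm, hz j, one_pow]
  set e : ℝ → ℂ := fun θ => Complex.exp ((θ:ℂ) * I) with he
  set u : Fin n → ℝ → ℝ := fun j θ => normSq (e θ - z j) with hu
  set f : ℝ → ℝ := fun θ => ∏ j, u j θ with hf
  set ud : Fin n → ℝ → ℝ := fun j θ => 2*(e θ * (starRingEnd ℂ) (z j)).im with hud
  have hud' : ∀ j θ, HasDerivAt (u j) (ud j θ) θ := fun j θ => u_hasDeriv (z j) (hzns j) θ
  have hudd : ∀ j θ, HasDerivAt (ud j) (2 - u j θ) θ := fun j θ => ud_hasDeriv (z j) (hzns j) θ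
  have hsq : ∀ j θ, (ud j θ)^2 = u j θ * (4 - u j θ) := fun j θ => ud_sq (z j) (hzns j) θ
  have hu0 : ∀ j θ, 0 ≤ u j θ := fun j θ => normSq_nonneg _
  have hucont : ∀ j, Continuous (u j) := fun j => by
    rw [continuous_iff_continuousAt]
    exact fun θ => (hud' j θ).continuousAt
  have hf0 : ∀ θ, 0 ≤ f θ := fun θ => Finset.prod_nonneg fun j _ => hu0 j θ
  -- maximum point
  have hGcont : Continuous (fun v : ℂ => ∏ j, normSq (v - z j)) := by
    apply continuous_finset_prod
    intro j _
    exact Complex.continuous_normSq.comp (continuous_id.sub continuous_const)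
  obtain ⟨w₀, hw₀s, hw₀m⟩ := (isCompact_sphere (0:ℂ) 1).exists_isMaxOn
    ⟨1, by simp⟩ hGcont.continuousOn
  have hw₀abs : ‖w₀‖ = 1 := by
    rw [mem_sphere_zero_iff_norm] at hw₀s
    exact hw₀s
  set θ₀ : ℝ := w₀.arg with hθ₀
  have he₀ : e θ₀ = w₀ := by
    have h := Complex.norm_mul_exp_arg_mul_I w₀
    rw [hw₀abs] at h
    simpa using h
  have hesph : ∀ θ, e θ ∈ Metric.sphere (0:ℂ) 1 := by
    intro θ
    rw [mem_sphere_zero_iff_norm]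
    simp [he, Complex.norm_exp]
  have hmax : ∀ θ, f θ ≤ f θ₀ := by
    intro θ
    have h1 : f θ = (fun v : ℂ => ∏ j, normSq (v - z j)) (e θ) := rfl
    have h2 : f θ₀ = (fun v : ℂ => ∏ j, normSq (v - z j)) w₀ := by rw [← he₀]
    rw [h1, h2]
    exact hw₀m (hesph θ)
  -- positivity of the maximum
  have hexists : ∃ θ' : ℝ, ∀ j, e θ' ≠ z j := by
    by_contra hcon
    push_neg at hcon
    have hπ : Real.pi ≠ 0 := Real.pi_ne_zero
    have hinj : ∀ k ∈ range (n+1), ∀ k' ∈ range (n+1),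
        e (2*Real.pi*(k:ℝ)/(n+1)) = e (2*Real.pi*(k':ℝ)/(n+1)) → k = k' := by
      intro k hk k' hk' hekk
      rw [mem_range] at hk hk'
      rw [he] at hekk
      simp only [] at hekk
      rw [Complex.exp_eq_exp_iff_exists_int] at hekk
      obtain ⟨m, hm⟩ := hekk
      have hI : ((2*Real.pi*(k:ℝ)/(n+1) : ℝ):ℂ) * I
          = ((2*Real.pi*(k':ℝ)/(n+1) + m*(2*Real.pi) : ℝ):ℂ) * I := by
        push_cast at hm ⊢
        linear_combination hm
      have hr : (2*Real.pi*(k:ℝ)/(n+1) : ℝ) = 2*Real.pi*(k':ℝ)/(n+1) + m*(2*Real.pi) := by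
        have h2 := mul_right_cancel₀ Complex.I_ne_zero hI
        exact_mod_cast h2
      have hn1 : ((n:ℝ)+1) ≠ 0 := by positivity
      have h2pi : (2*Real.pi) ≠ 0 := by positivity
      have hkr : (k:ℝ)*(2*Real.pi) = ((k':ℝ) + (m:ℝ)*((n:ℝ)+1))*(2*Real.pi) := by
        field_simp at hr
        linear_combination (2*Real.pi) * hr
      have hkr2 : (k:ℝ) = (k':ℝ) + (m:ℝ)*((n:ℝ)+1) := mul_right_cancel₀ h2pi hkr
      have hkz : (k:ℤ) = (k':ℤ) + m*((n:ℤ)+1) := by exact_mod_cast hkr2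
      rcases lt_trichotomy m 0 with hm' | hm' | hm'
      · have h6 := mul_le_mul_of_nonneg_right (show m ≤ -1 by omega)
          (show (0:ℤ) ≤ (n:ℤ)+1 by positivity)
        have h5 : (k:ℤ) ≤ (k':ℤ) - ((n:ℤ)+1) := by rw [hkz]; linarith
        omega
      · rw [hm', zero_mul, add_zero] at hkz
        omega
      · have h6 := mul_le_mul_of_nonneg_right (show (1:ℤ) ≤ m by omega)
          (show (0:ℤ) ≤ (n:ℤ)+1 by positivity)
        have h5 : (k':ℤ) + ((n:ℤ)+1) ≤ (k:ℤ) := by rw [hkz]; linarith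
        omega
    choose jf hjf using fun k : ℕ => hcon (2*Real.pi*(k:ℝ)/(n+1))
    have hcard := Finset.card_le_card_of_injOn (s := Finset.range (n+1))
      (t := (Finset.univ : Finset (Fin n))) jf (fun k _ => Finset.mem_univ (jf k)) ?_
    · rw [Finset.card_range, Finset.card_univ, Fintype.card_fin] at hcard
      omega
    · intro k hk k' hk' hj
      apply hinj k hk k' hk'
      rw [hjf k, hjf k', hj]
  obtain ⟨θ', hθ'⟩ := hexists
  have hfθ' : 0 < f θ' := Finset.prod_pos fun j _ => normSq_pos.2 (sub_ne_zero.2 (hθ' j))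
  have hM : 0 < f θ₀ := lt_of_lt_of_le hfθ' (hmax θ')
  have hMne : f θ₀ ≠ 0 := ne_of_gt hM
  have hup : ∀ j, 0 < u j θ₀ := by
    intro j
    rcases (hu0 j θ₀).lt_or_eq with h | h
    · exact h
    · exfalso
      have : f θ₀ = 0 := Finset.prod_eq_zero (Finset.mem_univ j) h.symm
      linarith
  -- Fourier representation
  set P : Finset (Finset (Fin n)) := (Finset.univ : Finset (Fin n)).powerset with hPdef
  set K : Finset (Fin n) → Finset (Fin n) → ℂ :=
    fun s t => (∏ j ∈ s, (-z j)) * (∏ j ∈ t, (-((starRingEnd ℂ) (z j)))) with hKdef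
  set dd : Finset (Fin n) → Finset (Fin n) → ℤ :=
    fun s t => (t.card : ℤ) - s.card with hdddef
  set F : ℝ → ℂ := fun θ => ∑ s ∈ P, ∑ t ∈ P,
    K s t * Complex.exp ((θ:ℂ) * ((dd s t : ℂ) * I)) with hFdef
  set F1 : ℝ → ℂ := fun θ => ∑ s ∈ P, ∑ t ∈ P,
    K s t * (((dd s t:ℂ)*I) * Complex.exp ((θ:ℂ) * ((dd s t:ℂ)*I))) with hF1def
  set F2 : ℝ → ℂ := fun θ => ∑ s ∈ P, ∑ t ∈ P,
    K s t * (((dd s t:ℂ)*I)^2 * Complex.exp ((θ:ℂ) * ((dd s t:ℂ)*I))) with hF2def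
  have hcard : ∀ s ∈ P, s.card ≤ n := by
    intro s hs
    rw [hPdef, Finset.mem_powerset] at hs
    have h2 := Finset.card_le_card hs
    simpa using h2
  have hFrep : ∀ θ, ((f θ : ℝ) : ℂ) = F θ := by
    intro θ
    have he0 : e θ ≠ 0 := Complex.exp_ne_zero _
    have hconj : (starRingEnd ℂ) (e θ) = (e θ)⁻¹ := conj_eq_inv _ (normSq_expI θ)
    have hA : ∏ j, (e θ - z j) = ∑ s ∈ P, (∏ j ∈ s, (-z j)) * (e θ)^(n - s.card) := by
      have h1 : ∏ j, (e θ - z j) = ∏ j, ((-z j) + e θ) := by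
        apply Finset.prod_congr rfl; intro j _; ring
      rw [h1, Finset.prod_add]
      apply Finset.sum_congr rfl
      intro s hs
      rw [Finset.prod_const]
      congr 1
      rw [Finset.card_sdiff_of_subset (Finset.mem_powerset.1 hs)]
      simp
    have hB : ∏ j, ((starRingEnd ℂ) (e θ) - (starRingEnd ℂ) (z j))
        = ∑ t ∈ P, (∏ j ∈ t, (-((starRingEnd ℂ) (z j)))) * ((e θ)⁻¹)^(n - t.card) := by
      have h1 : ∏ j, ((starRingEnd ℂ) (e θ) - (starRingEnd ℂ) (z j))
          = ∏ j, ((-((starRingEnd ℂ) (z j))) + (e θ)⁻¹) := by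
        apply Finset.prod_congr rfl; intro j _; rw [hconj]; ring
      rw [h1, Finset.prod_add]
      apply Finset.sum_congr rfl
      intro t ht
      rw [Finset.prod_const]
      congr 1
      rw [Finset.card_sdiff_of_subset (Finset.mem_powerset.1 ht)]
      simp
    calc ((f θ : ℝ) : ℂ) = ∏ j, ((u j θ : ℝ):ℂ) := by rw [hf]; push_cast; rfl
      _ = ∏ j, ((e θ - z j) * (starRingEnd ℂ) (e θ - z j)) := by
            apply Finset.prod_congr rfl; intro j _
            exact (Complex.mul_conj _).symm
      _ = (∏ j, (e θ - z j)) * ∏ j, ((starRingEnd ℂ) (e θ) - (starRingEnd ℂ) (z j)) := by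
            rw [← Finset.prod_mul_distrib]
            apply Finset.prod_congr rfl; intro j _
            rw [map_sub]
      _ = (∑ s ∈ P, (∏ j ∈ s, (-z j)) * (e θ)^(n - s.card))
          * (∑ t ∈ P, (∏ j ∈ t, (-((starRingEnd ℂ) (z j)))) * ((e θ)⁻¹)^(n - t.card)) := by
            rw [hA, hB]
      _ = ∑ s ∈ P, ∑ t ∈ P, ((∏ j ∈ s, (-z j)) * (e θ)^(n - s.card))
          * ((∏ j ∈ t, (-((starRingEnd ℂ) (z j)))) * ((e θ)⁻¹)^(n - t.card)) :=
            Finset.sum_mul_sum _ _ _ _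
      _ = F θ := by
            rw [hFdef]
            apply Finset.sum_congr rfl; intro s hs
            apply Finset.sum_congr rfl; intro t ht
            have h1 : (e θ)^(n-s.card) * ((e θ)⁻¹)^(n-t.card)
                = Complex.exp ((θ:ℂ)*((dd s t:ℂ)*I)) := by
              rw [inv_pow, ← zpow_natCast (e θ) (n-s.card), ← zpow_natCast (e θ) (n-t.card),
                ← zpow_neg, ← zpow_add₀ he0]
              have harg : ((n-s.card:ℕ):ℤ) + -((n-t.card:ℕ):ℤ) = dd s t := by
                rw [hdddef]
                push_cast [Nat.cast_sub (hcard s hs), Nat.cast_sub (hcard t ht)]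
                ring
              rw [harg]
              simp only [he]
              rw [← Complex.exp_int_mul]
              congr 1
              push_cast
              ring
            rw [mul_mul_mul_comm, h1]
  have hF1d : ∀ θ, HasDerivAt F (F1 θ) θ := by
    intro θ
    simp only [hFdef, hF1def]
    apply HasDerivAt.fun_sum; intro s _
    apply HasDerivAt.fun_sum; intro t _
    exact (expI_hasDeriv ((dd s t:ℂ)*I) θ).const_mul (K s t)
  have hF2d : ∀ θ, HasDerivAt F1 (F2 θ) θ := by
    intro θ
    simp only [hF1def, hF2def]
    apply HasDerivAt.fun_sum; intro s _
    apply HasDerivAt.fun_sum; intro t _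
    have h := (expI_hasDeriv ((dd s t:ℂ)*I) θ).const_mul (K s t * ((dd s t:ℂ)*I))
    have hfun : (fun y : ℝ => K s t * ((dd s t:ℂ)*I) * Complex.exp ((y:ℂ)*((dd s t:ℂ)*I)))
        = fun y : ℝ => K s t * (((dd s t:ℂ)*I) * Complex.exp ((y:ℂ)*((dd s t:ℂ)*I))) := by
      funext y; ring
    rw [hfun] at h
    refine h.congr_deriv ?_
    ring
  have hfd : ∀ θ, HasDerivAt f ((F1 θ).re) θ := by
    have hffun : f = fun θ => (F θ).re := funext fun θ => by
      rw [← hFrep θ, Complex.ofReal_re]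
    intro θ
    rw [hffun]
    exact Complex.reCLM.hasFDerivAt.comp_hasDerivAt θ (hF1d θ)
  have hF1red : ∀ θ, HasDerivAt (fun t => (F1 t).re) ((F2 θ).re) θ := fun θ =>
    Complex.reCLM.hasFDerivAt.comp_hasDerivAt θ (hF2d θ)
  have hcrit : (F1 θ₀).re = 0 := by
    have hlm : IsLocalMax f θ₀ := Filter.Eventually.of_forall hmax
    rw [← (hfd θ₀).deriv]
    exact hlm.deriv_eq_zero
  -- quadrature
  set φ : ℕ → ℝ := fun k => (2*(k:ℝ)+1)*Real.pi/n with hφdef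
  set ψ : ℕ → ℝ := fun k => 2*Real.pi*(k:ℝ)/n with hψdef
  set W : ℕ → ℝ := fun k => 2 / normSq (1 - Complex.exp ((φ k : ℝ) * I)) with hWdef
  set V : ℕ → ℝ := fun k => 2 / normSq (1 - Complex.exp ((ψ k : ℝ) * I)) with hVdef
  have hstar : ∀ s ∈ P, ∀ t ∈ P,
      ((dd s t:ℂ)*I)^2 + (n:ℂ)^2/2
        = ∑ k ∈ range n, ((W k : ℝ):ℂ) * (Complex.exp (((φ k : ℝ):ℂ) * I))^(dd s t)
          + ∑ k ∈ Ico 1 n, ((V k : ℝ):ℂ) * (1 - (Complex.exp (((ψ k : ℝ):ℂ) * I))^(dd s t)) := by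
    intro s hs t ht
    have hnat : (dd s t).natAbs ≤ n := by
      have h1 := hcard s hs
      have h2 := hcard t ht
      rw [hdddef]
      simp only []
      omega
    have h := star_exp n hn (dd s t) hnat
    simp only [hWdef, hVdef, hφdef, hψdef]
    rw [show ((dd s t:ℂ)*I)^2 = -(dd s t:ℂ)^2 by rw [mul_pow, Complex.I_sq]; ring]
    linear_combination -h
  have hq : F2 θ₀ + (n:ℂ)^2/2 * F θ₀
      = ∑ k ∈ range n, ((W k : ℝ):ℂ) * F (θ₀ + φ k)
        + ∑ k ∈ Ico 1 n, ((V k : ℝ):ℂ) * (F θ₀ - F (θ₀ + ψ k)) := by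
    have hL : F2 θ₀ + (n:ℂ)^2/2 * F θ₀
        = ∑ s ∈ P, ∑ t ∈ P, K s t * Complex.exp ((θ₀:ℂ)*((dd s t:ℂ)*I))
            * (((dd s t:ℂ)*I)^2 + (n:ℂ)^2/2) := by
      simp only [hF2def, hFdef]
      rw [mul_sum, ← sum_add_distrib]
      apply Finset.sum_congr rfl; intro s _
      rw [mul_sum, ← sum_add_distrib]
      apply Finset.sum_congr rfl; intro t _
      ring
    have hR1 : ∑ k ∈ range n, ((W k : ℝ):ℂ) * F (θ₀ + φ k)
        = ∑ s ∈ P, ∑ t ∈ P, K s t * Complex.exp ((θ₀:ℂ)*((dd s t:ℂ)*I))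
            * (∑ k ∈ range n, ((W k : ℝ):ℂ) * (Complex.exp (((φ k : ℝ):ℂ)*I))^(dd s t)) := by
      calc ∑ k ∈ range n, ((W k : ℝ):ℂ) * F (θ₀ + φ k)
          = ∑ k ∈ range n, ∑ s ∈ P, ∑ t ∈ P, K s t * Complex.exp ((θ₀:ℂ)*((dd s t:ℂ)*I))
              * (((W k : ℝ):ℂ) * (Complex.exp (((φ k : ℝ):ℂ)*I))^(dd s t)) := by
            apply Finset.sum_congr rfl; intro k _
            simp only [hFdef]
            rw [mul_sum]
            apply Finset.sum_congr rfl; intro s _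
            rw [mul_sum]
            apply Finset.sum_congr rfl; intro t _
            have hsplit : Complex.exp (((θ₀ + φ k : ℝ):ℂ) * ((dd s t:ℂ)*I))
                = Complex.exp ((θ₀:ℂ)*((dd s t:ℂ)*I))
                  * (Complex.exp (((φ k : ℝ):ℂ)*I))^(dd s t) := by
              rw [← Complex.exp_int_mul, ← Complex.exp_add]
              congr 1
              push_cast
              ring
            rw [hsplit]
            ring
        _ = _ := by
            rw [Finset.sum_comm]
            apply Finset.sum_congr rfl; intro s _
            rw [Finset.sum_comm]
            apply Finset.sum_congr rfl; intro t _
            rw [← mul_sum]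
    have hR2 : ∑ k ∈ Ico 1 n, ((V k : ℝ):ℂ) * (F θ₀ - F (θ₀ + ψ k))
        = ∑ s ∈ P, ∑ t ∈ P, K s t * Complex.exp ((θ₀:ℂ)*((dd s t:ℂ)*I))
            * (∑ k ∈ Ico 1 n, ((V k : ℝ):ℂ) * (1 - (Complex.exp (((ψ k : ℝ):ℂ)*I))^(dd s t))) := by
      calc ∑ k ∈ Ico 1 n, ((V k : ℝ):ℂ) * (F θ₀ - F (θ₀ + ψ k))
          = ∑ k ∈ Ico 1 n, ∑ s ∈ P, ∑ t ∈ P, K s t * Complex.exp ((θ₀:ℂ)*((dd s t:ℂ)*I))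
              * (((V k : ℝ):ℂ) * (1 - (Complex.exp (((ψ k : ℝ):ℂ)*I))^(dd s t))) := by
            apply Finset.sum_congr rfl; intro k _
            simp only [hFdef]
            rw [← Finset.sum_sub_distrib, mul_sum]
            apply Finset.sum_congr rfl; intro s _
            rw [← Finset.sum_sub_distrib, mul_sum]
            apply Finset.sum_congr rfl; intro t _
            have hsplit : Complex.exp (((θ₀ + ψ k : ℝ):ℂ) * ((dd s t:ℂ)*I))
                = Complex.exp ((θ₀:ℂ)*((dd s t:ℂ)*I))
                  * (Complex.exp (((ψ k : ℝ):ℂ)*I))^(dd s t) := by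
              rw [← Complex.exp_int_mul, ← Complex.exp_add]
              congr 1
              push_cast
              ring
            rw [hsplit]
            ring
        _ = _ := by
            rw [Finset.sum_comm]
            apply Finset.sum_congr rfl; intro s _
            rw [Finset.sum_comm]
            apply Finset.sum_congr rfl; intro t _
            rw [← mul_sum]
    rw [hL, hR1, hR2, ← sum_add_distrib]
    apply Finset.sum_congr rfl; intro s hs
    rw [← sum_add_distrib]
    apply Finset.sum_congr rfl; intro t ht
    have h := hstar s hs t ht
    linear_combination (K s t * Complex.exp ((θ₀:ℂ)*((dd s t:ℂ)*I))) * h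
  -- real part of the quadrature identity
  have hqre : (F2 θ₀).re = ∑ k ∈ range n, W k * f (θ₀ + φ k)
      + ∑ k ∈ Ico 1 n, V k * (f θ₀ - f (θ₀ + ψ k)) - (n:ℝ)^2/2 * f θ₀ := by
    have h := hq
    simp only [← hFrep] at h
    have h2 : F2 θ₀ = ((∑ k ∈ range n, W k * f (θ₀+φ k)
        + ∑ k ∈ Ico 1 n, V k * (f θ₀ - f (θ₀+ψ k)) - (n:ℝ)^2/2 * f θ₀ : ℝ):ℂ) := by
      push_cast
      linear_combination h
    rw [h2, Complex.ofReal_re]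
  have hb1 : 0 ≤ ∑ k ∈ range n, W k * f (θ₀+φ k) := Finset.sum_nonneg fun k _ =>
    mul_nonneg (div_nonneg (by norm_num) (normSq_nonneg _)) (hf0 _)
  have hb2 : 0 ≤ ∑ k ∈ Ico 1 n, V k * (f θ₀ - f (θ₀+ψ k)) := Finset.sum_nonneg fun k _ =>
    mul_nonneg (div_nonneg (by norm_num) (normSq_nonneg _)) (sub_nonneg.2 (hmax _))
  have hF2ge : -((n:ℝ)^2/2 * f θ₀) ≤ (F2 θ₀).re := by rw [hqre]; linarith
  -- log-derivative link
  set Nbd : Set ℝ := {θ | ∀ j, 0 < u j θ} with hNbddef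
  have hNopen : IsOpen Nbd := by
    have hN2 : Nbd = ⋂ j, (u j)⁻¹' (Set.Ioi 0) := by
      ext θ
      simp [hNbddef, Set.mem_iInter]
    rw [hN2]
    exact isOpen_iInter_of_finite fun j => (hucont j).isOpen_preimage _ isOpen_Ioi
  have hN0 : θ₀ ∈ Nbd := hup
  have hfposN : ∀ θ ∈ Nbd, 0 < f θ := fun θ hθ => Finset.prod_pos fun j _ => hθ j
  have hGH : (fun θ => (F1 θ).re / f θ) =ᶠ[nhds θ₀] (fun θ => ∑ j, ud j θ / u j θ) := by
    filter_upwards [hNopen.mem_nhds hN0] with θ hθ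
    have hfθ : f θ ≠ 0 := (hfposN θ hθ).ne'
    have hd1 : HasDerivAt (fun t => Real.log (f t)) ((F1 θ).re / f θ) θ := (hfd θ).log hfθ
    have hd2 : HasDerivAt (fun t => Real.log (f t)) (∑ j, ud j θ / u j θ) θ := by
      have hsum : HasDerivAt (fun t => ∑ j, Real.log (u j t)) (∑ j, ud j θ / u j θ) θ :=
        HasDerivAt.fun_sum fun j _ => (hud' j θ).log (hθ j).ne'
      apply hsum.congr_of_eventuallyEq
      filter_upwards [hNopen.mem_nhds hθ] with t ht
      exact Real.log_prod fun j _ => (ht j).ne'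
    exact hd1.unique hd2
  have hDG : HasDerivAt (fun θ => (F1 θ).re / f θ)
      (((F2 θ₀).re * f θ₀ - (F1 θ₀).re * (F1 θ₀).re) / (f θ₀)^2) θ₀ :=
    (hF1red θ₀).div (hfd θ₀) hMne
  have hDH : HasDerivAt (fun θ => ∑ j, ud j θ / u j θ)
      (∑ j, ((2 - u j θ₀) * u j θ₀ - ud j θ₀ * ud j θ₀) / (u j θ₀)^2) θ₀ :=
    HasDerivAt.fun_sum fun j _ => (hudd j θ₀).div (hud' j θ₀) (hup j).ne'
  have hDH2 : HasDerivAt (fun θ => ∑ j, ud j θ / u j θ)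
      (((F2 θ₀).re * f θ₀ - (F1 θ₀).re * (F1 θ₀).re) / (f θ₀)^2) θ₀ :=
    hDG.congr_of_eventuallyEq hGH.symm
  have hkey : ((F2 θ₀).re * f θ₀ - (F1 θ₀).re * (F1 θ₀).re) / (f θ₀)^2
      = ∑ j, ((2 - u j θ₀) * u j θ₀ - ud j θ₀ * ud j θ₀) / (u j θ₀)^2 :=
    hDH2.unique hDH
  have hsimp : ∑ j, ((2 - u j θ₀) * u j θ₀ - ud j θ₀ * ud j θ₀) / (u j θ₀)^2
      = -2 * ∑ j, 1 / u j θ₀ := by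
    rw [mul_sum]
    apply Finset.sum_congr rfl; intro j _
    have h4 := hsq j θ₀
    have hune : u j θ₀ ≠ 0 := (hup j).ne'
    have hnum : (2 - u j θ₀) * u j θ₀ - ud j θ₀ * ud j θ₀ = (-2) * u j θ₀ := by
      linear_combination -h4
    rw [hnum, pow_two, mul_div_mul_right _ _ hune]
    ring
  set S : ℝ := ∑ j, 1 / u j θ₀ with hSdef
  have hF2val : (F2 θ₀).re = -2 * S * f θ₀ := by
    have h := hkey
    rw [hsimp, hcrit] at h
    have h2 : (F2 θ₀).re * f θ₀ = -2*S*(f θ₀)^2 := by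
      field_simp at h
      linear_combination h
    have h3 : (F2 θ₀).re * f θ₀ = (-2*S*f θ₀) * f θ₀ := by rw [h2]; ring
    exact mul_right_cancel₀ hMne h3
  have hSle : S ≤ (n:ℝ)^2/4 := by
    rw [hF2val] at hF2ge
    nlinarith [hM]
  refine ⟨e θ₀, ?_, ?_⟩
  · simp [he, Complex.norm_exp]
  · have hrw : ∀ j : Fin n, 1 / ‖e θ₀ - z j‖ ^ 2 = 1 / u j θ₀ := by
      intro j
      rw [Complex.sq_norm]
    rw [Finset.sum_congr rfl fun j _ => hrw j]
    exact hSle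

/-- For any n points on the complex unit circle, there exists a point z₀ of modulus 1
such that ∑ⱼ 1/|z₀ - zⱼ|² ≤ n²/4. -/
theorem chebyshev_L2_unit_circle (n : ℕ) (z : Fin n → ℂ)
    (hz : ∀ j, ‖z j‖ = 1) :
    ∃ z₀ : ℂ, ‖z₀‖ = 1 ∧
      ∑ j, 1 / ‖z₀ - z j‖ ^ 2 ≤ (n : ℝ) ^ 2 / 4 := by
  rcases Nat.eq_zero_or_pos n with rfl | hn
  · exact ⟨1, by simp, by simp⟩
  · exact main_pos n hn z hz
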